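/- Let A and B be n×n positive definite Hermitian matrices with n ≥ 1. Then trace(A⁻¹·B) ≤ (1/(n−1)!) · ( trace(B⁻¹·A) )^(n−1) · ( det B / det A ). -/

import Mathlib

open Finset

lemma aux_prod_le {ι : Type*} (s : Finset ι) (x : ι → ℝ) (hx : ∀ i ∈ s, 0 ≤ x i) :
    (s.card.factorial : ℝ) * ∏ i ∈ s, x i ≤ (∑ i ∈ s, x i) ^ s.card := by
  induction s using Finset.cons_induction with
  | empty => simp
  | cons a t ha ih =>
    rw [Finset.prod_cons, Finset.sum_cons, Finset.card_cons]
    have hxa : 0 ≤ x a := hx a (Finset.mem_cons_self a t)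
    have hx' : ∀ i ∈ t, 0 ≤ x i := fun i hi => hx i (Finset.mem_cons_of_mem hi)
    have hT : 0 ≤ ∑ i ∈ t, x i := Finset.sum_nonneg hx'
    have ih' := ih hx'
    set T := ∑ i ∈ t, x i
    set m := t.card
    have key : x a ^ 1 * T ^ (m + 1 - 1) * ((m+1).choose 1 : ℝ) ≤ (x a + T) ^ (m + 1) := by
      rw [add_pow]
      apply Finset.single_le_sum (f := fun k => x a ^ k * T ^ (m + 1 - k) * ((m+1).choose k : ℝ))
      · intro k _
        positivity
      · simp [Nat.lt_succ_iff]
    have key2 : (m + 1 : ℝ) * x a * T ^ m ≤ (x a + T) ^ (m + 1) := by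
      calc (m + 1 : ℝ) * x a * T ^ m = x a ^ 1 * T ^ (m + 1 - 1) * ((m+1).choose 1 : ℝ) := by
            simp [Nat.choose_one_right]; ring
        _ ≤ _ := key
    calc ((m+1).factorial : ℝ) * (x a * ∏ i ∈ t, x i)
        = (m + 1 : ℝ) * x a * ((m.factorial : ℝ) * ∏ i ∈ t, x i) := by
          rw [Nat.factorial_succ]; push_cast; ring
      _ ≤ (m + 1 : ℝ) * x a * T ^ m := by
          apply mul_le_mul_of_nonneg_left ih' (by positivity)
      _ ≤ (x a + T) ^ (m + 1) := key2

lemma aux_esymm {ι : Type*} [DecidableEq ι] {s : Finset ι} (hs : s.Nonempty) (x : ι → ℝ)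
    (hx : ∀ i ∈ s, 0 ≤ x i) :
    ((s.card - 1).factorial : ℝ) * ∑ i ∈ s, ∏ j ∈ s.erase i, x j
      ≤ (∑ i ∈ s, x i) ^ (s.card - 1) := by
  induction hs using Finset.Nonempty.cons_induction with
  | singleton a => simp
  | cons a t ha ht ih =>
    have hxa : 0 ≤ x a := hx a (Finset.mem_cons_self a t)
    have hx' : ∀ i ∈ t, 0 ≤ x i := fun i hi => hx i (Finset.mem_cons_of_mem hi)
    have hT : 0 ≤ ∑ i ∈ t, x i := Finset.sum_nonneg hx'
    have ih' := ih hx'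
    obtain ⟨m, hm⟩ : ∃ m, t.card = m + 1 :=
      ⟨t.card - 1, (Nat.succ_pred_eq_of_pos (Finset.card_pos.mpr ht)).symm⟩
    have hsum : ∑ i ∈ (t.cons a ha), ∏ j ∈ (t.cons a ha).erase i, x j
        = (∏ j ∈ t, x j) + x a * ∑ i ∈ t, ∏ j ∈ t.erase i, x j := by
      rw [Finset.sum_cons, Finset.erase_cons]
      congr 1
      rw [Finset.mul_sum]
      apply Finset.sum_congr rfl
      intro i hi
      rw [Finset.erase_cons_of_ne ha (fun h => ha (h ▸ hi)), Finset.prod_cons]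
    rw [hsum, Finset.sum_cons, Finset.card_cons, hm]
    simp only [Nat.add_sub_cancel]
    set T := ∑ i ∈ t, x i
    have key : T ^ (m+1) + (m + 1 : ℝ) * x a * T ^ m ≤ (x a + T) ^ (m + 1) := by
      rw [add_pow]
      have hsub : ({0, 1} : Finset ℕ) ⊆ Finset.range (m + 1 + 1) := by
        intro k hk
        fin_cases hk <;> simp [Nat.lt_succ_iff]
      calc T ^ (m+1) + (m + 1 : ℝ) * x a * T ^ m
          = ∑ k ∈ ({0, 1} : Finset ℕ), x a ^ k * T ^ (m + 1 - k) * ((m+1).choose k : ℝ) := by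
            rw [Finset.sum_pair (by norm_num)]
            simp [Nat.choose_one_right]; ring
        _ ≤ _ := Finset.sum_le_sum_of_subset_of_nonneg hsub
            (fun k _ _ => by positivity)
    calc ((m+1).factorial : ℝ) * ((∏ j ∈ t, x j) + x a * ∑ i ∈ t, ∏ j ∈ t.erase i, x j)
        = ((m+1).factorial : ℝ) * ∏ j ∈ t, x j
          + (m+1 : ℝ) * x a * ((m.factorial : ℝ) * ∑ i ∈ t, ∏ j ∈ t.erase i, x j) := by
          rw [Nat.factorial_succ]; push_cast; ring
      _ ≤ T ^ (m+1) + (m+1 : ℝ) * x a * T ^ m := by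
          apply add_le_add
          · rw [← hm]; exact aux_prod_le t x hx'
          · apply mul_le_mul_of_nonneg_left _ (by positivity)
            rw [hm] at ih'; simpa using ih'
      _ ≤ (x a + T) ^ (m + 1) := key

lemma aux_main (n : ℕ) (hn : 1 ≤ n) (lam : Fin n → ℝ) (hlam : ∀ i, 0 < lam i) :
    ∑ i, lam i ≤ (1 / (n-1).factorial : ℝ) * (∑ i, (lam i)⁻¹) ^ (n - 1) * ∏ i, lam i := by
  have : NeZero n := ⟨by omega⟩
  have hcard : (Finset.univ : Finset (Fin n)).card = n := by simp
  have h1 : ∀ i : Fin n, lam i = (∏ j, lam j) * ∏ j ∈ Finset.univ.erase i, (lam j)⁻¹ := by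
    intro i
    have hprod : ∏ j ∈ Finset.univ.erase i, (lam j * (lam j)⁻¹) = 1 := by
      apply Finset.prod_eq_one
      intro j _
      exact mul_inv_cancel₀ (hlam j).ne'
    rw [← Finset.mul_prod_erase Finset.univ lam (Finset.mem_univ i), mul_assoc,
      ← Finset.prod_mul_distrib, hprod, mul_one]
  have h2 : ∑ i, lam i = (∏ j, lam j) * ∑ i, ∏ j ∈ Finset.univ.erase i, (lam j)⁻¹ := by
    rw [Finset.mul_sum]
    exact Finset.sum_congr rfl fun i _ => h1 i
  have h3 := aux_esymm (Finset.univ_nonempty (α := Fin n)) (fun j => (lam j)⁻¹)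
    (fun i _ => (inv_nonneg).mpr (hlam i).le)
  rw [hcard] at h3
  have hP : 0 ≤ ∏ j, lam j := Finset.prod_nonneg fun j _ => (hlam j).le
  have hfac : 0 < ((n-1).factorial : ℝ) := by positivity
  rw [h2]
  rw [div_mul_eq_mul_div, one_mul, div_mul_eq_mul_div, le_div_iff₀ hfac]
  calc (∏ j, lam j) * (∑ i, ∏ j ∈ Finset.univ.erase i, (lam j)⁻¹) * ((n-1).factorial : ℝ)
      = (∏ j, lam j) * (((n-1).factorial : ℝ) * ∑ i, ∏ j ∈ Finset.univ.erase i, (lam j)⁻¹) := by ring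
    _ ≤ (∏ j, lam j) * (∑ i, (lam i)⁻¹) ^ (n-1) := mul_le_mul_of_nonneg_left h3 hP
    _ = (∑ i, (lam i)⁻¹) ^ (n - 1) * ∏ i, lam i := by ring


open Matrix
open scoped ComplexOrder

section helpers
variable {n : ℕ}

lemma trace_conj_diag (U : Matrix.unitaryGroup (Fin n) ℂ) (d : Fin n → ℂ) :
    ((U : Matrix (Fin n) (Fin n) ℂ) * Matrix.diagonal d * star (U : Matrix (Fin n) (Fin n) ℂ)).trace
      = ∑ i, d i := by
  rw [Matrix.trace_mul_comm, ← Matrix.mul_assoc, Unitary.coe_star_mul_self, Matrix.one_mul,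
    Matrix.trace_diagonal]

end helpers

open scoped MatrixOrder

theorem stmt_8 (n : ℕ) (hn : 1 ≤ n) (A B : Matrix (Fin n) (Fin n) ℂ)
    (hA : A.PosDef) (hB : B.PosDef) :
    ((A⁻¹ * B).trace).re ≤
      (1 / (n - 1).factorial : ℝ) * (((B⁻¹ * A).trace).re) ^ (n - 1) *
        (B.det.re / A.det.re) := by
  classical
  set S := CFC.sqrt A with hSdef
  have hS : S.PosSemidef := (CFC.sqrt_nonneg A).posSemidef
  have hSH : Sᴴ = S := hS.1
  have hSS : S * S = A := CFC.sqrt_mul_sqrt_self A hA.posSemidef.nonneg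
  have hdetA : A.det ≠ 0 := hA.det_pos.ne'
  have hdetSA : S.det * S.det = A.det := by rw [← Matrix.det_mul, hSS]
  have hdetS0 : S.det ≠ 0 := by
    intro h; apply hdetA; rw [← hdetSA, h, mul_zero]
  have hdetS : IsUnit S.det := isUnit_iff_ne_zero.mpr hdetS0
  have hSinv : S * S⁻¹ = 1 := Matrix.mul_nonsing_inv S hdetS
  have hSinv' : S⁻¹ * S = 1 := Matrix.nonsing_inv_mul S hdetS
  set M := S⁻¹ * B * S⁻¹ with hMdef
  have hMrw : M = (S⁻¹)ᴴ * B * S⁻¹ := by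
    rw [Matrix.conjTranspose_nonsing_inv, hSH]
  have hMpd : M.PosDef := by
    refine Matrix.PosDef.of_dotProduct_mulVec_pos ?_ ?_
    · rw [hMrw]
      exact Matrix.isHermitian_conjTranspose_mul_mul _ hB.1
    · intro x hx
      have hx' : S⁻¹ *ᵥ x ≠ 0 := by
        intro h
        apply hx
        have hxx : S *ᵥ (S⁻¹ *ᵥ x) = x := by
          rw [Matrix.mulVec_mulVec, hSinv, Matrix.one_mulVec]
        rw [h, Matrix.mulVec_zero] at hxx
        exact hxx.symm
      have := hB.dotProduct_mulVec_pos hx'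
      rw [hMrw]
      simpa only [star_mulVec, Matrix.dotProduct_mulVec, Matrix.vecMul_vecMul] using this
  have hHM : M.IsHermitian := hMpd.1
  set ev : Fin n → ℝ := hHM.eigenvalues with hev
  have hevpos : ∀ i, 0 < ev i := hMpd.eigenvalues_pos
  set U := hHM.eigenvectorUnitary with hU
  have hspec : M = (U : Matrix (Fin n) (Fin n) ℂ) * Matrix.diagonal (RCLike.ofReal ∘ ev)
      * star (U : Matrix (Fin n) (Fin n) ℂ) := hHM.spectral_theorem
  -- trace of M
  have htraceM : M.trace = ∑ i, (ev i : ℂ) := by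
    rw [hspec, trace_conj_diag]
    rfl
  -- inverse of M via spectral data
  have hMinv : M⁻¹ = (U : Matrix (Fin n) (Fin n) ℂ) * Matrix.diagonal (fun i => ((ev i : ℂ))⁻¹)
      * star (U : Matrix (Fin n) (Fin n) ℂ) := by
    apply Matrix.inv_eq_right_inv
    rw [hspec]
    have hDD : Matrix.diagonal (RCLike.ofReal ∘ ev) *
        Matrix.diagonal (fun i => ((ev i : ℂ))⁻¹) = (1 : Matrix (Fin n) (Fin n) ℂ) := by
      have hfun : (fun i => (RCLike.ofReal ∘ ev) i * ((ev i : ℂ))⁻¹) = fun _ => (1:ℂ) := by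
        funext i
        exact mul_inv_cancel₀ (RCLike.ofReal_ne_zero.mpr (hevpos i).ne')
      rw [Matrix.diagonal_mul_diagonal, hfun, Matrix.diagonal_one]
    simp only [← Matrix.mul_assoc]
    rw [Matrix.mul_assoc ((U : Matrix (Fin n) (Fin n) ℂ) * Matrix.diagonal (RCLike.ofReal ∘ ev))
        (star (U : Matrix (Fin n) (Fin n) ℂ)) (U : Matrix (Fin n) (Fin n) ℂ),
      Unitary.coe_star_mul_self, Matrix.mul_one,
      Matrix.mul_assoc (U : Matrix (Fin n) (Fin n) ℂ), hDD, Matrix.mul_one,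
      (Matrix.mem_unitaryGroup_iff).mp U.2]
  have htraceMinv : M⁻¹.trace = ∑ i, ((ev i : ℂ))⁻¹ := by
    rw [hMinv, trace_conj_diag]
  have hdetM : M.det = ∏ i, (ev i : ℂ) := hHM.det_eq_prod_eigenvalues
  -- relate to A, B
  have e1 : (A⁻¹ * B).trace = M.trace := by
    have hAinv : A⁻¹ = S⁻¹ * S⁻¹ := by rw [← hSS, Matrix.mul_inv_rev]
    rw [hAinv, Matrix.mul_assoc, Matrix.trace_mul_comm, hMdef, Matrix.mul_assoc]
  have e2 : M⁻¹.trace = (B⁻¹ * A).trace := by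
    have hMinv2 : M⁻¹ = S * B⁻¹ * S := by
      rw [hMdef, Matrix.mul_inv_rev, Matrix.mul_inv_rev,
        Matrix.nonsing_inv_nonsing_inv S hdetS, Matrix.mul_assoc]
    rw [hMinv2, Matrix.trace_mul_comm, ← Matrix.mul_assoc, hSS]
    exact Matrix.trace_mul_comm A B⁻¹
  have e3 : M.det = B.det / A.det := by
    have : S⁻¹.det = (S.det)⁻¹ := by
      rw [Matrix.det_nonsing_inv, Ring.inverse_eq_inv']
    rw [hMdef, Matrix.det_mul, Matrix.det_mul, this, ← hdetSA]
    field_simp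
  -- real forms
  have r1 : ((A⁻¹ * B).trace).re = ∑ i, ev i := by
    rw [e1, htraceM, Complex.re_sum]
    simp
  have r2 : ((B⁻¹ * A).trace).re = ∑ i, (ev i)⁻¹ := by
    rw [← e2, htraceMinv, Complex.re_sum]
    simp [← Complex.ofReal_inv]
  have himA : A.det = (A.det.re : ℂ) := by
    have h := (Complex.lt_def.mp hA.det_pos).2
    apply Complex.ext <;> simp [← h]
  have himB : B.det = (B.det.re : ℂ) := by
    have h := (Complex.lt_def.mp hB.det_pos).2
    apply Complex.ext <;> simp [← h]
  have hdetAre : 0 < A.det.re := (Complex.lt_def.mp hA.det_pos).1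
  have r3 : B.det.re / A.det.re = ∏ i, ev i := by
    have hc : ((B.det.re / A.det.re : ℝ) : ℂ) = ((∏ i, ev i : ℝ) : ℂ) := by
      rw [Complex.ofReal_div, ← himA, ← himB, ← e3, hdetM]
      push_cast
      rfl
    exact_mod_cast hc
  rw [r1, r2, r3]
  exact aux_main n hn ev hevpos
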